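/- Weak two-scale limit of an oscillating product: let a : ℝ → ℝ be continuous and 1-periodic, and let (vε) ⊂ L²(0,1) be a sequence converging strongly in L²(0,1) to v. Then ∫₀¹ a(x/ε) vε(x) φ(x) dx → (∫₀¹ a(y) dy) ∫₀¹ v(x) φ(x) dx as ε → 0, for every φ ∈ C([0,1]). -/

import Mathlib

open Set Filter MeasureTheory intervalIntegral

lemma periodic_bound {f : ℝ → ℝ} (hf : Continuous f) (hp : ∀ y, f (y + 1) = f y) :
    ∃ C, 0 ≤ C ∧ ∀ t, |f t| ≤ C := by
  obtain ⟨C, hC⟩ := isCompact_Icc.exists_bound_of_continuousOn (hf.continuousOn (s := Icc (0:ℝ) 1))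
  refine ⟨C, le_trans (norm_nonneg (f 0)) (hC 0 (by norm_num)), fun t => ?_⟩
  have hper : Function.Periodic f 1 := hp
  have h1 : f (Int.fract t) = f t := by
    have h2 := hper.sub_int_mul_eq (x := t) ⌊t⌋
    rw [mul_one] at h2
    exact h2
  rw [← h1]
  exact hC _ ⟨(Int.fract_nonneg t), (Int.fract_lt_one t).le⟩

lemma osc_poly (a : ℝ → ℝ) (ha : Continuous a) (haper : ∀ y, a (y + 1) = a y)
    (p : Polynomial ℝ) :
    Tendsto (fun ε : ℝ => ∫ x in (0:ℝ)..1, a (x / ε) * p.eval x) (nhdsWithin 0 (Ioi 0))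
      (nhds ((∫ y in (0:ℝ)..1, a y) * ∫ x in (0:ℝ)..1, p.eval x)) := by
  set A : ℝ := ∫ y in (0:ℝ)..1, a y with hA
  set b : ℝ → ℝ := fun t => a t - A with hbdef
  have hb : Continuous b := ha.sub continuous_const
  have hbper : ∀ t, b (t + 1) = b t := fun t => by simp [hbdef, haper t]
  have hbint0 : (∫ s in (0:ℝ)..1, b s) = 0 := by
    rw [intervalIntegral.integral_sub (ha.intervalIntegrable 0 1)
      (intervalIntegrable_const), intervalIntegral.integral_const]
    simp [hA]
  set H : ℝ → ℝ := fun t => ∫ s in (0:ℝ)..t, b s with hHdef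
  have hH : ∀ t, HasDerivAt H (b t) t := fun t =>
    (hb.integral_hasStrictDerivAt 0 t).hasDerivAt
  have hHc : Continuous H := by
    rw [continuous_iff_continuousAt]; exact fun t => (hH t).continuousAt
  have hHper : ∀ t, H (t + 1) = H t := by
    intro t
    have h1 : H (t + 1) = H t + ∫ s in t..(t+1), b s := by
      rw [hHdef]
      exact (intervalIntegral.integral_add_adjacent_intervals
        (hb.intervalIntegrable 0 t) (hb.intervalIntegrable t (t+1))).symm
    have hbP : Function.Periodic b 1 := hbper
    have h2 : (∫ s in t..(t+1), b s) = ∫ s in (0:ℝ)..(0+1), b s :=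
      hbP.intervalIntegral_add_eq t 0
    rw [h1, h2]
    simp [hbint0]
  obtain ⟨M, hM0, hMb⟩ := periodic_bound hHc hHper
  obtain ⟨Cp, hCp⟩ := isCompact_Icc.exists_bound_of_continuousOn
    ((p.continuous).continuousOn (s := Icc (0:ℝ) 1))
  obtain ⟨Cq, hCq⟩ := isCompact_Icc.exists_bound_of_continuousOn
    ((p.derivative.continuous).continuousOn (s := Icc (0:ℝ) 1))
  have hCp0 : 0 ≤ Cp := le_trans (norm_nonneg _) (hCp 0 (by norm_num))
  have hCq0 : 0 ≤ Cq := le_trans (norm_nonneg _) (hCq 0 (by norm_num))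
  -- main estimate
  have key : ∀ ε ∈ Ioi (0:ℝ),
      ‖(∫ x in (0:ℝ)..1, p.eval x * b (x / ε))‖ ≤ (Cp + Cq) * M * ε := by
    intro ε hε
    have hεpos : (0:ℝ) < ε := hε
    have hεne : ε ≠ 0 := ne_of_gt hεpos
    set G : ℝ → ℝ := fun x => ε * H (x / ε) with hGdef
    have hG : ∀ x, HasDerivAt G (b (x / ε)) x := by
      intro x
      have h1 : HasDerivAt (fun x : ℝ => x / ε) (1 / ε) x := (hasDerivAt_id x).div_const ε
      have h2 : HasDerivAt (fun x : ℝ => H (x / ε)) (b (x / ε) * (1 / ε)) x :=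
        by have := HasDerivAt.comp x (hH (x / ε)) h1; exact this
      have h3 := h2.const_mul ε
      have : ε * (b (x / ε) * (1 / ε)) = b (x / ε) := by field_simp
      rwa [this] at h3
    have hu : ∀ x ∈ uIcc (0:ℝ) 1, HasDerivAt (fun y => p.eval y) (p.derivative.eval x) x :=
      fun x _ => p.hasDerivAt x
    have hv : ∀ x ∈ uIcc (0:ℝ) 1, HasDerivAt G (b (x / ε)) x := fun x _ => hG x
    have hu' : IntervalIntegrable (fun x => p.derivative.eval x) volume 0 1 :=
      (p.derivative.continuous).intervalIntegrable 0 1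
    have hv' : IntervalIntegrable (fun x => b (x / ε)) volume 0 1 :=
      (hb.comp (continuous_id.div_const ε)).intervalIntegrable 0 1
    have ibp := intervalIntegral.integral_mul_deriv_eq_deriv_mul hu hv hu' hv'
    have hG0 : G 0 = 0 := by simp [hGdef, hHdef]
    have hGbound : ∀ x, ‖G x‖ ≤ ε * M := by
      intro x
      rw [hGdef]
      simp only [norm_mul, Real.norm_eq_abs]
      rw [abs_of_pos hεpos]
      exact mul_le_mul_of_nonneg_left (hMb _) hεpos.le
    rw [ibp, hG0, mul_zero, sub_zero]
    have t1 : ‖p.eval 1 * G 1‖ ≤ Cp * (ε * M) := by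
      rw [norm_mul]
      exact mul_le_mul (hCp 1 (by norm_num)) (hGbound 1) (norm_nonneg _) hCp0
    have t2 : ‖∫ x in (0:ℝ)..1, p.derivative.eval x * G x‖ ≤ Cq * (ε * M) * |1 - 0| := by
      apply intervalIntegral.norm_integral_le_of_norm_le_const
      intro x hx
      have hx' : x ∈ Icc (0:ℝ) 1 := by
        rw [uIoc_of_le (by norm_num : (0:ℝ) ≤ 1)] at hx
        exact Ioc_subset_Icc_self hx
      rw [norm_mul]
      exact mul_le_mul (hCq x hx') (hGbound x) (norm_nonneg _) hCq0
    calc ‖p.eval 1 * G 1 - ∫ x in (0:ℝ)..1, p.derivative.eval x * G x‖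
        ≤ ‖p.eval 1 * G 1‖ + ‖∫ x in (0:ℝ)..1, p.derivative.eval x * G x‖ := norm_sub_le _ _
      _ ≤ Cp * (ε * M) + Cq * (ε * M) * |1 - 0| := add_le_add t1 t2
      _ = (Cp + Cq) * M * ε := by rw [abs_of_nonneg (by norm_num : (0:ℝ) ≤ 1 - 0)]; ring
  -- limit of the oscillating part
  have hosc : Tendsto (fun ε : ℝ => ∫ x in (0:ℝ)..1, p.eval x * b (x / ε))
      (nhdsWithin 0 (Ioi 0)) (nhds 0) := by
    apply squeeze_zero_norm' (eventually_nhdsWithin_of_forall key)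
    have : Tendsto (fun ε : ℝ => (Cp + Cq) * M * ε) (nhds 0) (nhds ((Cp + Cq) * M * 0)) :=
        (continuous_const.mul continuous_id).tendsto 0
    rw [mul_zero] at this
    exact this.mono_left nhdsWithin_le_nhds
  -- decompose the integral
  have hdecomp : ∀ ε ∈ Ioi (0:ℝ),
      (∫ x in (0:ℝ)..1, a (x / ε) * p.eval x)
        = (∫ x in (0:ℝ)..1, p.eval x * b (x / ε)) + A * ∫ x in (0:ℝ)..1, p.eval x := by
    intro ε hε
    have hεne : ε ≠ 0 := ne_of_gt hε
    have h1 : ∀ x, a (x / ε) * p.eval x = p.eval x * b (x / ε) + A * p.eval x := by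
      intro x; simp [hbdef]; ring
    rw [intervalIntegral.integral_congr (g := fun x => p.eval x * b (x / ε) + A * p.eval x)
      (fun x _ => h1 x)]
    have hi1 : IntervalIntegrable (fun x => Polynomial.eval x p * b (x / ε)) volume 0 1 := by
      apply Continuous.intervalIntegrable; fun_prop
    have hi2 : IntervalIntegrable (fun x => A * Polynomial.eval x p) volume 0 1 := by
      apply Continuous.intervalIntegrable; fun_prop
    rw [intervalIntegral.integral_add hi1 hi2, intervalIntegral.integral_const_mul]
  have hlim : Tendsto (fun ε : ℝ =>
      (∫ x in (0:ℝ)..1, p.eval x * b (x / ε)) + A * ∫ x in (0:ℝ)..1, p.eval x)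
      (nhdsWithin 0 (Ioi 0)) (nhds (A * ∫ x in (0:ℝ)..1, p.eval x)) := by
    have := hosc.add_const (A * ∫ x in (0:ℝ)..1, p.eval x)
    rwa [zero_add] at this
  exact hlim.congr' (by
    filter_upwards [self_mem_nhdsWithin] with ε hε
    exact (hdecomp ε hε).symm)

/-- Compensated convergence: an oscillating periodic factor times a strongly
L²-convergent sequence converges to the product of the mean and the limit. -/
theorem oscillating_product_limit (a : ℝ → ℝ) (ha : Continuous a)
    (haper : ∀ y, a (y + 1) = a y)
    (v : ℝ → ℝ → ℝ) (vlim : ℝ → ℝ)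
    (hv : ∀ ε ∈ Ioi (0:ℝ), MemLp (v ε) 2 (volume.restrict (Ioc (0:ℝ) 1)))
    (hvlim : MemLp vlim 2 (volume.restrict (Ioc (0:ℝ) 1)))
    (hstrong : Tendsto (fun ε : ℝ =>
        eLpNorm (fun x => v ε x - vlim x) 2 (volume.restrict (Ioc (0:ℝ) 1)))
      (nhdsWithin 0 (Ioi 0)) (nhds 0))
    (φ : ℝ → ℝ) (hφ : ContinuousOn φ (Icc 0 1)) :
    Tendsto (fun ε : ℝ => ∫ x in Ioc (0:ℝ) 1, a (x / ε) * v ε x * φ x)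
      (nhdsWithin 0 (Ioi 0))
      (nhds ((∫ y in (0:ℝ)..1, a y) * ∫ x in Ioc (0:ℝ) 1, vlim x * φ x)) := by
  set μ := volume.restrict (Ioc (0:ℝ) 1) with hμdef
  haveI : IsProbabilityMeasure μ := by
    constructor
    rw [hμdef, Measure.restrict_apply_univ, Real.volume_Ioc]
    norm_num
  obtain ⟨Ca, hCa0, hCa⟩ := periodic_bound ha haper
  obtain ⟨Cφ, hCφ⟩ := isCompact_Icc.exists_bound_of_continuousOn hφ
  have hCφ0 : 0 ≤ Cφ := le_trans (norm_nonneg _) (hCφ 0 (by norm_num))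
  have hφmeas : AEStronglyMeasurable φ μ :=
    (hφ.mono Ioc_subset_Icc_self).aestronglyMeasurable measurableSet_Ioc
  have hφbound : ∀ᵐ x ∂μ, ‖φ x‖ ≤ Cφ := by
    filter_upwards [ae_restrict_mem measurableSet_Ioc] with x hx
    exact hCφ x (Ioc_subset_Icc_self hx)
  have haemul : ∀ (ε : ℝ) {w : ℝ → ℝ}, Integrable w μ →
      Integrable (fun x => a (x / ε) * w x) μ := fun ε w hw =>
    hw.bdd_mul ((ha.comp (continuous_id.div_const ε)).aestronglyMeasurable)
      (Eventually.of_forall (fun x => by simpa using hCa (x / ε)))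
  have hvlimInt : Integrable vlim μ :=
    memLp_one_iff_integrable.mp (hvlim.mono_exponent one_le_two)
  have hgInt : Integrable (fun x => vlim x * φ x) μ :=
    (hvlimInt.bdd_mul hφmeas hφbound).congr (Eventually.of_forall fun x => mul_comm _ _)
  have hIntdiff : ∀ ε ∈ Ioi (0:ℝ), Integrable (fun x => v ε x - vlim x) μ := fun ε hε =>
    memLp_one_iff_integrable.mp (((hv ε hε).sub hvlim).mono_exponent one_le_two)
  have hdφInt : ∀ ε ∈ Ioi (0:ℝ), Integrable (fun x => (v ε x - vlim x) * φ x) μ := fun ε hε =>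
    ((hIntdiff ε hε).bdd_mul hφmeas hφbound).congr (Eventually.of_forall fun x => mul_comm _ _)
  set A : ℝ := ∫ y in (0:ℝ)..1, a y with hAdef
  set L : ℝ := ∫ x, vlim x * φ x ∂μ with hLdef
  -- Part 1 : the difference term goes to 0
  have hD1 : Tendsto (fun ε : ℝ => ∫ x, a (x / ε) * ((v ε x - vlim x) * φ x) ∂μ)
      (nhdsWithin 0 (Ioi 0)) (nhds 0) := by
    have hN1 : Tendsto (fun ε : ℝ => eLpNorm (fun x => v ε x - vlim x) 1 μ)
        (nhdsWithin 0 (Ioi 0)) (nhds 0) := by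
      apply tendsto_of_tendsto_of_tendsto_of_le_of_le' tendsto_const_nhds hstrong
      · exact Eventually.of_forall (fun ε => zero_le)
      · filter_upwards [self_mem_nhdsWithin] with ε hε
        exact eLpNorm_le_eLpNorm_of_exponent_le one_le_two
          ((hv ε hε).sub hvlim).aestronglyMeasurable
    have hN : Tendsto (fun ε : ℝ => (eLpNorm (fun x => v ε x - vlim x) 1 μ).toReal)
        (nhdsWithin 0 (Ioi 0)) (nhds 0) := by
      have := (ENNReal.tendsto_toReal (by norm_num : (0:ENNReal) ≠ ⊤)).comp hN1
      exact this
    apply squeeze_zero_norm' ?_ (by simpa using hN.const_mul (Ca * Cφ))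
    filter_upwards [self_mem_nhdsWithin] with ε hε
    have hint := hdφInt ε hε
    calc ‖∫ x, a (x / ε) * ((v ε x - vlim x) * φ x) ∂μ‖
        ≤ ∫ x, ‖a (x / ε) * ((v ε x - vlim x) * φ x)‖ ∂μ := norm_integral_le_integral_norm _
      _ ≤ ∫ x, (Ca * Cφ) * ‖v ε x - vlim x‖ ∂μ := by
          apply integral_mono_of_nonneg (Eventually.of_forall fun x => norm_nonneg _)
            ((hIntdiff ε hε).norm.const_mul _)
          filter_upwards [ae_restrict_mem measurableSet_Ioc] with x hx
          simp only [Real.norm_eq_abs]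
          calc |a (x / ε) * ((v ε x - vlim x) * φ x)|
              = |a (x / ε)| * (|v ε x - vlim x| * |φ x|) := by rw [abs_mul, abs_mul]
            _ ≤ Ca * (|v ε x - vlim x| * Cφ) := by
                apply mul_le_mul (hCa _) _ (by positivity) hCa0
                apply mul_le_mul_of_nonneg_left _ (abs_nonneg _)
                simpa [Real.norm_eq_abs] using hCφ x (Ioc_subset_Icc_self hx)
            _ = Ca * Cφ * |v ε x - vlim x| := by ring
      _ = (Ca * Cφ) * ∫ x, ‖v ε x - vlim x‖ ∂μ := integral_const_mul _ _
      _ = (Ca * Cφ) * (eLpNorm (fun x => v ε x - vlim x) 1 μ).toReal := by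
          have hm : AEStronglyMeasurable (fun x => v ε x - vlim x) μ :=
            ((hv ε hε).sub hvlim).aestronglyMeasurable
          rw [integral_norm_eq_lintegral_enorm hm, eLpNorm_one_eq_lintegral_enorm]
  -- Part 2 : the limit term
  have hT : Tendsto (fun ε : ℝ => ∫ x, a (x / ε) * (vlim x * φ x) ∂μ)
      (nhdsWithin 0 (Ioi 0)) (nhds (A * L)) := by
    rw [Metric.tendsto_nhds]
    intro r hr
    set δ : ℝ := r / (2 * Ca + 2 * |A| + 2) with hδdef
    have hden : (0:ℝ) < 2 * Ca + 2 * |A| + 2 := by positivity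
    have hδ : 0 < δ := div_pos hr hden
    set g : ℝ → ℝ := fun x => vlim x * φ x with hgdef
    set f : ℝ → ℝ := (Ioc (0:ℝ) 1).indicator g with hfdef
    have hfInt : Integrable f volume := (integrable_indicator_iff measurableSet_Ioc).2 hgInt
    have hfmem : MemLp f 1 volume := memLp_one_iff_integrable.2 hfInt
    obtain ⟨ψ, -, hψδ, ψcont, ψmem⟩ := hfmem.exists_hasCompactSupport_eLpNorm_sub_le
      (by norm_num : (1:ENNReal) ≠ ⊤) (ε := ENNReal.ofReal δ) (ENNReal.ofReal_pos.2 hδ).ne'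
    have hψInt : Integrable ψ volume := memLp_one_iff_integrable.1 ψmem
    have h1 : ∫ x, ‖g x - ψ x‖ ∂μ ≤ δ := by
      calc ∫ x, ‖g x - ψ x‖ ∂μ = ∫ x, ‖(f - ψ) x‖ ∂μ := by
            apply MeasureTheory.integral_congr_ae
            filter_upwards [ae_restrict_mem measurableSet_Ioc] with x hx
            rw [Pi.sub_apply, hfdef, indicator_of_mem hx]
        _ ≤ ∫ x, ‖(f - ψ) x‖ := integral_mono_measure Measure.restrict_le_self
            (Eventually.of_forall fun x => norm_nonneg _) (hfInt.sub hψInt).norm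
        _ = (eLpNorm (f - ψ) 1 volume).toReal := by
            rw [integral_norm_eq_lintegral_enorm (hfInt.sub hψInt).aestronglyMeasurable,
              eLpNorm_one_eq_lintegral_enorm]
        _ ≤ (ENNReal.ofReal δ).toReal := ENNReal.toReal_mono ENNReal.ofReal_ne_top hψδ
        _ = δ := ENNReal.toReal_ofReal hδ.le
    obtain ⟨p, hp⟩ := exists_polynomial_near_of_continuousOn 0 1 ψ ψcont.continuousOn δ hδ
    have hpIntμ : Integrable (fun x => Polynomial.eval x p) μ := p.continuous.integrableOn_Ioc
    have hψIntμ : Integrable ψ μ := ψcont.integrableOn_Ioc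
    have hn1 : Integrable (fun x => ‖g x - ψ x‖) μ := (hgInt.sub hψIntμ).norm
    have hn2 : Integrable (fun x => ‖ψ x - Polynomial.eval x p‖) μ := (hψIntμ.sub hpIntμ).norm
    have hn3 : Integrable (fun x => ‖g x - Polynomial.eval x p‖) μ := (hgInt.sub hpIntμ).norm
    have h2 : ∫ x, ‖ψ x - Polynomial.eval x p‖ ∂μ ≤ δ := by
      calc ∫ x, ‖ψ x - Polynomial.eval x p‖ ∂μ ≤ ∫ _x, δ ∂μ := by
            apply integral_mono_ae hn2 (integrable_const δ)
            filter_upwards [ae_restrict_mem measurableSet_Ioc] with x hx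
            have h := hp x (Ioc_subset_Icc_self hx)
            simp only [Real.norm_eq_abs]
            rw [abs_sub_comm]
            exact h.le
        _ = δ := by simp
    have h3 : ∫ x, ‖g x - Polynomial.eval x p‖ ∂μ ≤ 2 * δ := by
      calc ∫ x, ‖g x - Polynomial.eval x p‖ ∂μ
          ≤ ∫ x, (‖g x - ψ x‖ + ‖ψ x - Polynomial.eval x p‖) ∂μ := by
            apply integral_mono hn3 (hn1.add hn2)
            intro x
            calc ‖g x - Polynomial.eval x p‖
                = ‖(g x - ψ x) + (ψ x - Polynomial.eval x p)‖ := by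
                  rw [sub_add_sub_cancel]
              _ ≤ ‖g x - ψ x‖ + ‖ψ x - Polynomial.eval x p‖ := norm_add_le _ _
        _ = (∫ x, ‖g x - ψ x‖ ∂μ) + ∫ x, ‖ψ x - Polynomial.eval x p‖ ∂μ :=
            MeasureTheory.integral_add hn1 hn2
        _ ≤ δ + δ := add_le_add h1 h2
        _ = 2 * δ := by ring
    have hoscp := osc_poly a ha haper p
    rw [Metric.tendsto_nhds] at hoscp
    filter_upwards [hoscp δ hδ, self_mem_nhdsWithin] with ε hdist hε
    have hioc1 : (∫ x in (0:ℝ)..1, a (x / ε) * Polynomial.eval x p)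
        = ∫ x, a (x / ε) * Polynomial.eval x p ∂μ :=
      intervalIntegral.integral_of_le zero_le_one
    have hioc2 : (∫ x in (0:ℝ)..1, Polynomial.eval x p) = ∫ x, Polynomial.eval x p ∂μ :=
      intervalIntegral.integral_of_le zero_le_one
    rw [hioc1, hioc2] at hdist
    set S : ℝ := ∫ x, a (x / ε) * g x ∂μ with hSdef
    set P : ℝ := ∫ x, a (x / ε) * Polynomial.eval x p ∂μ with hPdef
    set Ip : ℝ := ∫ x, Polynomial.eval x p ∂μ with hIpdef
    have t1 : dist S P ≤ Ca * (2 * δ) := by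
      rw [dist_eq_norm, hSdef, hPdef,
        ← MeasureTheory.integral_sub (haemul ε hgInt) (haemul ε hpIntμ)]
      calc ‖∫ x, (a (x / ε) * g x - a (x / ε) * Polynomial.eval x p) ∂μ‖
          ≤ ∫ x, ‖a (x / ε) * g x - a (x / ε) * Polynomial.eval x p‖ ∂μ :=
            MeasureTheory.norm_integral_le_integral_norm _
        _ ≤ ∫ x, Ca * ‖g x - Polynomial.eval x p‖ ∂μ := by
            apply integral_mono_of_nonneg (Eventually.of_forall fun x => norm_nonneg _)
              (hn3.const_mul Ca)
            apply Eventually.of_forall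
            intro x
            show ‖a (x / ε) * g x - a (x / ε) * Polynomial.eval x p‖
                ≤ Ca * ‖g x - Polynomial.eval x p‖
            have he : a (x / ε) * g x - a (x / ε) * Polynomial.eval x p
                = a (x / ε) * (g x - Polynomial.eval x p) := by ring
            rw [he, norm_mul]
            apply mul_le_mul_of_nonneg_right _ (norm_nonneg _)
            simpa using hCa (x / ε)
        _ = Ca * ∫ x, ‖g x - Polynomial.eval x p‖ ∂μ := integral_const_mul _ _
        _ ≤ Ca * (2 * δ) := mul_le_mul_of_nonneg_left h3 hCa0
    have t3 : dist (A * Ip) (A * L) ≤ |A| * (2 * δ) := by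
      rw [Real.dist_eq, ← mul_sub, abs_mul]
      apply mul_le_mul_of_nonneg_left _ (abs_nonneg A)
      calc |Ip - L| = ‖∫ x, (Polynomial.eval x p - g x) ∂μ‖ := by
            rw [Real.norm_eq_abs, hIpdef, hLdef, ← MeasureTheory.integral_sub hpIntμ hgInt]
        _ ≤ ∫ x, ‖Polynomial.eval x p - g x‖ ∂μ := MeasureTheory.norm_integral_le_integral_norm _
        _ = ∫ x, ‖g x - Polynomial.eval x p‖ ∂μ := by
            apply MeasureTheory.integral_congr_ae
            exact Eventually.of_forall fun x => norm_sub_rev _ _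
        _ ≤ 2 * δ := h3
    have htri : dist S (A * L) ≤ dist S P + dist P (A * Ip) + dist (A * Ip) (A * L) :=
      dist_triangle4 _ _ _ _
    have hsum : dist S (A * L) < (2 * Ca + 2 * |A| + 1) * δ := by
      nlinarith [htri, t1, hdist, t3]
    have hfin : (2 * Ca + 2 * |A| + 1) * δ < r := by
      have hr' : (2 * Ca + 2 * |A| + 2) * δ = r := by
        rw [hδdef]; field_simp
      nlinarith [hδ]
    exact lt_trans hsum hfin
  -- combine
  have hsplit : ∀ᶠ ε in nhdsWithin (0:ℝ) (Ioi 0),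
      (∫ x, a (x / ε) * v ε x * φ x ∂μ)
        = (∫ x, a (x / ε) * ((v ε x - vlim x) * φ x) ∂μ)
          + ∫ x, a (x / ε) * (vlim x * φ x) ∂μ := by
    filter_upwards [self_mem_nhdsWithin] with ε hε
    rw [← MeasureTheory.integral_add (haemul ε (hdφInt ε hε)) (haemul ε hgInt)]
    apply MeasureTheory.integral_congr_ae
    exact Eventually.of_forall fun x => by ring
  have hfinal := hD1.add hT
  rw [zero_add] at hfinal
  exact Tendsto.congr' (hsplit.mono fun ε h => h.symm) hfinal
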